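/- arXiv:1101.2962 — 2 statements merged into one kernel-verified Lean document; each statement's English description precedes it below -/
import Mathlib

section
/- (Fractional oscillator.) Let 0<α<1, ω ∈ ℝ, and consider the Lagrangian L = (1/2)(₀D_t^α u)² − ω² u²/2 on [0,1] for smooth functions u with u(0) = 0 and u′(0) = 1. For every sufficiently smooth solution u of the fractional Euler–Lagrange equation ω² u − _tD_1^α( ₀D_t^α u ) = 0, the quantity (1/2)(₀D_t^α u)² − ω² u²/2 + ∫_0^t [ −(₀D_s^α u′)·(₀D_s^α u) + u′(s)·_sD_1^α( ₀D_s^α u ) ] ds is constant in t on (0,1). -/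
open MeasureTheory Filter Set Topology

/-- Left Riemann–Liouville fractional derivative of order `α` with lower terminal `a`:
`ₐD_t^α u = (1/Γ(1-α)) (d/dt) ∫_a^t u(θ) (t-θ)^(-α) dθ`. -/
noncomputable def leftRL (α a : ℝ) (u : ℝ → ℝ) : ℝ → ℝ :=
  deriv fun t => (1 / Real.Gamma (1 - α)) * ∫ θ in a..t, u θ / (t - θ) ^ α

/-- Right Riemann–Liouville fractional derivative of order `α` with upper terminal `b`:
`ₜD_b^α u = (1/Γ(1-α)) (-d/dt) ∫_t^b u(θ) (θ-t)^(-α) dθ`. -/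
noncomputable def rightRL (α b : ℝ) (u : ℝ → ℝ) : ℝ → ℝ := fun t =>
  - deriv (fun s => (1 / Real.Gamma (1 - α)) * ∫ θ in s..b, u θ / (θ - s) ^ α) t

/-- `u` is absolutely continuous on `[a,b]`: it is an integral of an integrable function. -/
def ACOn (u : ℝ → ℝ) (a b : ℝ) : Prop :=
  ∃ v : ℝ → ℝ, IntervalIntegrable v MeasureTheory.volume a b ∧
    ∀ t ∈ Set.Icc a b, u t = u a + ∫ s in a..t, v s

/-- Partial derivative of `L(t,u,p)` with respect to the first argument. -/
noncomputable def p1 (L : ℝ → ℝ → ℝ → ℝ) (t u p : ℝ) : ℝ := deriv (fun s => L s u p) t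

/-- Partial derivative of `L(t,u,p)` with respect to the second argument. -/
noncomputable def p2 (L : ℝ → ℝ → ℝ → ℝ) (t u p : ℝ) : ℝ := deriv (fun v => L t v p) u

/-- Partial derivative of `L(t,u,p)` with respect to the third argument. -/
noncomputable def p3 (L : ℝ → ℝ → ℝ → ℝ) (t u p : ℝ) : ℝ := deriv (fun q => L t u q) p

open intervalIntegral

variable {α : ℝ}

noncomputable def JJ (α : ℝ) (v : ℝ → ℝ) (t : ℝ) : ℝ := ∫ θ in (0:ℝ)..t, v θ * (t - θ) ^ (-α)

lemma cont_rpow_const {q : ℝ} (hq : 0 ≤ q) : Continuous fun x : ℝ => x ^ q := by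
  rw [continuous_iff_continuousAt]
  exact fun x => Real.continuousAt_rpow_const x q (Or.inr hq)

lemma intInt_rpow_mul {β : ℝ} (hβ : -1 < β) (t : ℝ) {v : ℝ → ℝ} (hv : Continuous v) :
    IntervalIntegrable (fun θ => v θ * (t - θ) ^ β) volume 0 t := by
  have h1 : IntervalIntegrable (fun θ : ℝ => (t - θ) ^ β) volume 0 t := by
    have := (intervalIntegrable_rpow' hβ (a := 0) (b := t)).comp_sub_left t
    simpa using this.symm
  exact h1.continuousOn_mul hv.continuousOn

lemma step {v : ℝ → ℝ} (hv : ContDiff ℝ (⊤ : ℕ∞) v) {β : ℝ} (hβ : -1 < β)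
    {t : ℝ} (ht : 0 ≤ t) :
    ∫ θ in (0:ℝ)..t, v θ * (t - θ) ^ β
      = v 0 * t ^ (β + 1) / (β + 1) + (1 / (β + 1)) * ∫ ρ in (0:ℝ)..t, deriv v ρ * (t - ρ) ^ (β + 1) := by
  have hβ1 : 0 < β + 1 := by linarith
  have hβ1' : β + 1 ≠ 0 := ne_of_gt hβ1
  rcases eq_or_lt_of_le ht with rfl | ht
  · simp [Real.zero_rpow hβ1']
  have hv' : Continuous (deriv v) := hv.continuous_deriv (by norm_num)
  have hvc : Continuous v := hv.continuous
  have hrp : Continuous fun x : ℝ => x ^ (β + 1) := cont_rpow_const hβ1.le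
  set ψ : ℝ → ℝ := fun ρ => deriv v ρ * (t - ρ) ^ (β + 1) with hψ
  have hψc : Continuous ψ := hv'.mul (hrp.comp (continuous_const.sub continuous_id))
  set P : ℝ → ℝ := fun θ => ∫ ρ in (0:ℝ)..θ, ψ ρ with hP
  have hPd : ∀ θ : ℝ, HasDerivAt P (ψ θ) θ := fun θ =>
    intervalIntegral.integral_hasDerivAt_right (hψc.intervalIntegrable _ _)
      (hψc.stronglyMeasurableAtFilter _ _) hψc.continuousAt
  set G : ℝ → ℝ := fun θ => -(v θ * (t - θ) ^ (β + 1)) / (β + 1) + (1 / (β + 1)) * P θ with hG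
  have hPc : Continuous P := by
    rw [continuous_iff_continuousAt]
    exact fun θ => (hPd θ).continuousAt
  have hGc : Continuous G := by fun_prop
  have hGd : ∀ θ ∈ Ioo (0:ℝ) t, HasDerivAt G (v θ * (t - θ) ^ β) θ := by
    intro θ hθ
    have hsub : (0:ℝ) < t - θ := by simp [sub_pos, hθ.2]
    have hx : HasDerivAt (fun x : ℝ => x ^ (β + 1)) ((β + 1) * (t - θ) ^ β) (t - θ) := by
      have := Real.hasDerivAt_rpow_const (x := t - θ) (p := β + 1) (Or.inl hsub.ne')
      simpa [show β + 1 - 1 = β by ring] using this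
    have h1 : HasDerivAt (fun θ : ℝ => (t - θ) ^ (β + 1))
        (-((β + 1) * (t - θ) ^ β)) θ := by
      have hid : HasDerivAt (fun θ : ℝ => t - θ) (-1) θ := by
        simpa using (hasDerivAt_id θ).const_sub t
      exact (hx.comp θ hid).congr_deriv (by ring)
    have hvd : HasDerivAt v (deriv v θ) θ :=
      ((hv.differentiable (by norm_num)) θ).hasDerivAt
    have h2 : HasDerivAt (fun θ => -(v θ * (t - θ) ^ (β + 1)) / (β + 1))
        ((-(deriv v θ * (t - θ) ^ (β + 1) + v θ * -((β + 1) * (t - θ) ^ β))) / (β + 1)) θ :=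
      ((hvd.mul h1).neg).div_const _
    have h3 := h2.add ((hPd θ).const_mul (1 / (β + 1)))
    refine h3.congr_deriv ?_
    simp only [hψ]
    field_simp
    ring
  have hFTC := intervalIntegral.integral_eq_sub_of_hasDeriv_right_of_le ht.le
    hGc.continuousOn (fun x hx => (hGd x hx).hasDerivWithinAt)
    (intInt_rpow_mul hβ t hvc)
  rw [hFTC]
  have e1 : G t = (1 / (β + 1)) * P t := by
    simp [hG, Real.zero_rpow hβ1']
  have e2 : G 0 = -(v 0 * t ^ (β + 1)) / (β + 1) := by
    simp [hG, hP]
  rw [e1, e2]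
  ring

lemma hasDerivAt_maxrpow {p : ℝ} (hp : 1 < p) (x : ℝ) :
    HasDerivAt (fun x : ℝ => (max x 0) ^ p) (p * (max x 0) ^ (p - 1)) x := by
  have hp0 : p - 1 ≠ 0 := sub_ne_zero.mpr (ne_of_gt hp)
  rcases lt_trichotomy x 0 with hx | rfl | hx
  · have hev : (fun x : ℝ => (max x 0) ^ p) =ᶠ[𝓝 x] fun _ => (0:ℝ) ^ p := by
      filter_upwards [Iio_mem_nhds hx] with y hy
      rw [max_eq_right (le_of_lt hy)]
    have : HasDerivAt (fun _ : ℝ => (0:ℝ) ^ p) 0 x := hasDerivAt_const _ _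
    have h2 := this.congr_of_eventuallyEq hev
    simpa [max_eq_right hx.le, Real.zero_rpow hp0] using h2
  · rw [hasDerivAt_iff_tendsto_slope]
    have hb : Tendsto (fun y : ℝ => |y| ^ (p - 1)) (𝓝[≠] (0:ℝ)) (𝓝 0) := by
      have hc : ContinuousAt (fun y : ℝ => |y| ^ (p - 1)) 0 := by
        have h1 : ContinuousAt (fun y : ℝ => y ^ (p - 1)) |(0:ℝ)| := by
          rw [abs_zero]; exact Real.continuousAt_rpow_const _ _ (Or.inr (by linarith))
        exact h1.comp continuous_abs.continuousAt
      have := hc.tendsto.mono_left (nhdsWithin_le_nhds (s := {(0:ℝ)}ᶜ))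
      simpa [Real.zero_rpow hp0] using this
    have hsq : ∀ y : ℝ, ‖slope (fun x : ℝ => (max x 0) ^ p) 0 y‖ ≤ |y| ^ (p - 1) := by
      intro y
      rcases le_or_gt y 0 with hy | hy
      · simp [slope_def_field, max_eq_right hy, Real.zero_rpow (by positivity : p ≠ 0),
          Real.rpow_nonneg (abs_nonneg y)]
      · rw [slope_def_field]
        simp only [max_eq_left hy.le, max_eq_right le_rfl, Real.zero_rpow (by positivity : p ≠ 0)]
        rw [sub_zero, sub_zero, abs_of_pos hy]
        rw [Real.rpow_sub hy, Real.rpow_one]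
        rw [Real.norm_eq_abs, abs_of_nonneg (by positivity)]
    have := squeeze_zero_norm hsq hb
    simpa [max_eq_right le_rfl, Real.zero_rpow hp0] using this
  · have hev : (fun x : ℝ => (max x 0) ^ p) =ᶠ[𝓝 x] fun x => x ^ p := by
      filter_upwards [Ioi_mem_nhds hx] with y hy
      rw [max_eq_left (le_of_lt hy)]
    have h2 := (Real.hasDerivAt_rpow_const (x := x) (p := p) (Or.inl hx.ne')).congr_of_eventuallyEq hev
    simpa [max_eq_left hx.le] using h2

section ML
variable (hα0 : 0 < α) (hα1 : α < 1)

lemma hasDerivAt_J (hα0 : 0 < α) (hα1 : α < 1) {v : ℝ → ℝ} (hv : ContDiff ℝ (⊤ : ℕ∞) v)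
    {t₀ : ℝ} (h0 : 0 < t₀) (h2 : t₀ < 2) :
    HasDerivAt (JJ α v) (v 0 * t₀ ^ (-α) + JJ α (deriv v) t₀) t₀ := by
  have hv' : ContDiff ℝ (⊤ : ℕ∞) (deriv v) := (contDiff_infty_iff_deriv.mp hv).2
  have hv'' : ContDiff ℝ (⊤ : ℕ∞) (deriv (deriv v)) := (contDiff_infty_iff_deriv.mp hv').2
  set W : ℝ → ℝ := deriv (deriv v) with hW
  have hWc : Continuous W := hv''.continuous
  have e1 : (1:ℝ) - α ≠ 0 := by intro h; linarith [sub_eq_zero.mp h]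
  have e2 : (2:ℝ) - α ≠ 0 := by intro h; linarith [sub_eq_zero.mp h]
  have e2' : (1:ℝ) < 2 - α := by linarith
  set h : ℝ → ℝ := fun x => (max x 0) ^ (2 - α) with hh
  have hhc : Continuous h :=
    (cont_rpow_const (by linarith)).comp (continuous_id.max continuous_const)
  set K : ℝ → ℝ := fun t => ∫ ρ in (0:ℝ)..2, W ρ * h (t - ρ) with hK
  -- split lemma
  have Ksplit : ∀ q : ℝ, 0 < q → ∀ t ∈ Icc (0:ℝ) 2,
      (∫ ρ in (0:ℝ)..2, W ρ * (max (t - ρ) 0) ^ q)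
        = ∫ ρ in (0:ℝ)..t, W ρ * (t - ρ) ^ q := by
    intro q hq t htm
    have hcq : Continuous fun ρ : ℝ => W ρ * (max (t - ρ) 0) ^ q :=
      hWc.mul ((cont_rpow_const hq.le).comp
        (((continuous_const.sub continuous_id).max continuous_const)))
    have hadj := intervalIntegral.integral_add_adjacent_intervals
      (a := (0:ℝ)) (b := t) (c := 2) (μ := volume)
      (hcq.intervalIntegrable _ _) (hcq.intervalIntegrable _ _)
    have hzero2 : (∫ ρ in t..(2:ℝ), W ρ * (max (t - ρ) 0) ^ q) = 0 := by
      rw [intervalIntegral.integral_congr (g := fun _ => (0:ℝ)), intervalIntegral.integral_zero]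
      intro ρ hρ
      rw [uIcc_of_le htm.2] at hρ
      simp only
      rw [max_eq_right (by linarith [hρ.1] : t - ρ ≤ 0), Real.zero_rpow (ne_of_gt hq), mul_zero]
    have hcongr : (∫ ρ in (0:ℝ)..t, W ρ * (max (t - ρ) 0) ^ q)
        = ∫ ρ in (0:ℝ)..t, W ρ * (t - ρ) ^ q := by
      apply intervalIntegral.integral_congr
      intro ρ hρ
      rw [uIcc_of_le htm.1] at hρ
      simp only
      rw [max_eq_left (by linarith [hρ.2] : (0:ℝ) ≤ t - ρ)]
    rw [← hadj, hzero2, add_zero, hcongr]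
  have hexp1 : -α + 1 = 1 - α := by ring
  have hexp3 : 1 - α + 1 = 2 - α := by ring
  have hFc : ∀ t : ℝ, Continuous fun ρ => W ρ * h (t - ρ) := by
    intro t
    exact hWc.mul (hhc.comp (continuous_const.sub continuous_id))
  have hF'c : ∀ t : ℝ, Continuous fun ρ => W ρ * ((2-α) * (max (t - ρ) 0) ^ (1-α)) := by
    intro t
    exact hWc.mul (continuous_const.mul ((cont_rpow_const (by linarith)).comp
      ((continuous_const.sub continuous_id).max continuous_const)))
  -- representation of JJ on Ioo 0 2
  have hrepr : ∀ t ∈ Ioo (0:ℝ) 2, JJ α v t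
      = v 0 * t ^ (1-α)/(1-α) + (1/(1-α)) * (deriv v 0 * t ^ (2-α)/(2-α) + (1/(2-α)) * K t) := by
    intro t htm
    have s1 := step hv (by linarith : (-1:ℝ) < -α) htm.1.le
    have s2 := step hv' (by linarith : (-1:ℝ) < -α + 1) htm.1.le
    simp only [hexp1, hexp3] at s1 s2
    have s3 := (Ksplit (2-α) (by linarith) t ⟨htm.1.le, htm.2.le⟩).symm
    show (∫ θ in (0:ℝ)..t, v θ * (t - θ) ^ (-α)) = _
    rw [s1, s2, s3]
  -- derivative of K
  set I1 : ℝ := ∫ ρ in (0:ℝ)..t₀, W ρ * (t₀ - ρ) ^ (1-α) with hI1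
  have hKd : HasDerivAt K ((2-α) * I1) t₀ := by
    obtain ⟨M, hM⟩ := (isCompact_Icc (a := (0:ℝ)) (b := 2)).exists_bound_of_continuousOn
      hWc.continuousOn
    have hball : ∀ t ∈ Metric.ball t₀ 1, ∀ ρ ∈ Set.uIoc (0:ℝ) 2, max (t - ρ) 0 ≤ 3 := by
      intro t ht ρ hρ
      rw [Real.ball_eq_Ioo] at ht
      rw [uIoc_of_le (by norm_num : (0:ℝ) ≤ 2)] at hρ
      refine max_le (by linarith [ht.2, hρ.1]) (by norm_num)
    have hmeas : ∀ᶠ t in 𝓝 t₀,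
        AEStronglyMeasurable (fun ρ => W ρ * h (t - ρ)) (volume.restrict (Set.uIoc (0:ℝ) 2)) := by
      filter_upwards with t
      exact (hFc t).aestronglyMeasurable
    have hint : IntervalIntegrable (fun ρ => W ρ * h (t₀ - ρ)) volume 0 2 :=
      (hFc t₀).intervalIntegrable _ _
    have h'meas : AEStronglyMeasurable (fun ρ => W ρ * ((2-α) * (max (t₀ - ρ) 0) ^ (1-α)))
        (volume.restrict (Set.uIoc (0:ℝ) 2)) := (hF'c t₀).aestronglyMeasurable
    have hbnd : ∀ᵐ ρ ∂volume, ρ ∈ Set.uIoc (0:ℝ) 2 → ∀ t ∈ Metric.ball t₀ 1,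
        ‖W ρ * ((2-α) * (max (t - ρ) 0) ^ (1-α))‖ ≤ |M| * ((2-α) * 3 ^ (1-α)) := by
      filter_upwards with ρ hρ t ht
      have h1 : |W ρ| ≤ |M| := by
        refine le_trans ?_ (le_abs_self M)
        rw [uIoc_of_le (by norm_num : (0:ℝ) ≤ 2)] at hρ
        simpa using hM ρ ⟨hρ.1.le, hρ.2⟩
      have h2 : (max (t - ρ) 0) ^ (1-α) ≤ 3 ^ (1-α) :=
        Real.rpow_le_rpow (le_max_right _ _) (hball t ht ρ hρ) (by linarith)
      rw [Real.norm_eq_abs, abs_mul]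
      have h3 : |(2-α) * (max (t - ρ) 0) ^ (1-α)| = (2-α) * (max (t - ρ) 0) ^ (1-α) :=
        abs_of_nonneg (mul_nonneg (by linarith) (Real.rpow_nonneg (le_max_right _ _) _))
      rw [h3]
      refine mul_le_mul h1 ?_ ?_ (abs_nonneg _)
      · nlinarith [Real.rpow_nonneg (le_max_right (t-ρ) 0) (1-α)]
      · positivity
    have hbint : IntervalIntegrable (fun _ : ℝ => |M| * ((2-α) * 3 ^ (1-α))) volume 0 2 :=
      intervalIntegrable_const
    have hdiff : ∀ᵐ ρ ∂volume, ρ ∈ Set.uIoc (0:ℝ) 2 → ∀ t ∈ Metric.ball t₀ 1,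
        HasDerivAt (fun t => W ρ * h (t - ρ)) (W ρ * ((2-α) * (max (t - ρ) 0) ^ (1-α))) t := by
      filter_upwards with ρ hρ t ht
      have hd := (hasDerivAt_maxrpow e2' (t - ρ)).comp t ((hasDerivAt_id t).sub_const ρ)
      have := hd.const_mul (W ρ)
      simpa [hh, show (2:ℝ)-α-1 = 1-α from by ring] using this
    have key := intervalIntegral.hasDerivAt_integral_of_dominated_loc_of_deriv_le
      (𝕜 := ℝ) (μ := volume) (F := fun t ρ => W ρ * h (t - ρ))
      (F' := fun t ρ => W ρ * ((2-α) * (max (t - ρ) 0) ^ (1-α)))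
      (x₀ := t₀) (a := 0) (b := 2) (bound := fun _ => |M| * ((2-α) * 3 ^ (1-α)))
      (Metric.ball_mem_nhds t₀ one_pos) hmeas hint h'meas hbnd hbint hdiff
    have hval : (∫ ρ in (0:ℝ)..2, W ρ * ((2-α) * (max (t₀ - ρ) 0) ^ (1-α)))
        = (2-α) * I1 := by
      have e : (∫ ρ in (0:ℝ)..2, W ρ * ((2-α) * (max (t₀ - ρ) 0) ^ (1-α)))
          = ∫ ρ in (0:ℝ)..2, (2-α) * (W ρ * (max (t₀ - ρ) 0) ^ (1-α)) := by
        apply intervalIntegral.integral_congr; intro ρ _; simp only; ring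
      rw [e, intervalIntegral.integral_const_mul,
        Ksplit (1-α) (by linarith) t₀ ⟨h0.le, by linarith⟩]
    rw [← hval]
    exact key.2
  -- assemble
  have hd1 : HasDerivAt (fun t : ℝ => t ^ (1-α)) ((1-α) * t₀ ^ (-α)) t₀ := by
    simpa [show (1:ℝ)-α-1 = -α from by ring]
      using Real.hasDerivAt_rpow_const (x := t₀) (p := 1-α) (Or.inl h0.ne')
  have hd2 : HasDerivAt (fun t : ℝ => t ^ (2-α)) ((2-α) * t₀ ^ (1-α)) t₀ := by
    simpa [show (2:ℝ)-α-1 = 1-α from by ring]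
      using Real.hasDerivAt_rpow_const (x := t₀) (p := 2-α) (Or.inl h0.ne')
  have hW1 : HasDerivAt (fun t : ℝ => v 0 * t ^ (1-α)/(1-α))
      (v 0 * ((1-α) * t₀ ^ (-α))/(1-α)) t₀ := (hd1.const_mul (v 0)).div_const _
  have hW2 : HasDerivAt (fun t : ℝ => deriv v 0 * t ^ (2-α)/(2-α))
      (deriv v 0 * ((2-α) * t₀ ^ (1-α))/(2-α)) t₀ := (hd2.const_mul (deriv v 0)).div_const _
  have hWd := hW1.add ((hW2.add (hKd.const_mul (1/(2-α)))).const_mul (1/(1-α)))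
  have hJd := hWd.congr_of_eventuallyEq
    (eventually_of_mem (Ioo_mem_nhds h0 h2) (fun t ht => hrepr t ht))
  have hJv' : JJ α (deriv v) t₀ = deriv v 0 * t₀ ^ (1-α)/(1-α) + (1/(1-α)) * I1 := by
    have s1 := step hv' (by linarith : (-1:ℝ) < -α) h0.le
    simp only [hexp1] at s1
    exact s1
  have hvaleq : v 0 * ((1-α) * t₀ ^ (-α))/(1-α)
      + (1/(1-α)) * (deriv v 0 * ((2-α) * t₀ ^ (1-α))/(2-α) + (1/(2-α)) * ((2-α) * I1))
      = v 0 * t₀ ^ (-α) + JJ α (deriv v) t₀ := by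
    rw [hJv']
    field_simp
  rw [← hvaleq]
  exact hJd
end ML

lemma div_to_mul (α : ℝ) (v : ℝ → ℝ) {t : ℝ} (ht : 0 ≤ t) :
    (∫ θ in (0:ℝ)..t, v θ / (t - θ) ^ α) = JJ α v t := by
  apply intervalIntegral.integral_congr
  intro θ hθ
  rw [uIcc_of_le ht] at hθ
  simp only
  rw [Real.rpow_neg (by linarith [hθ.2] : (0:ℝ) ≤ t - θ), div_eq_mul_inv]

lemma leftRL_repr (hα0 : 0 < α) (hα1 : α < 1) {v : ℝ → ℝ} (hv : ContDiff ℝ (⊤ : ℕ∞) v)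
    {t₀ : ℝ} (h0 : 0 < t₀) (h2 : t₀ < 2) :
    leftRL α 0 v t₀ = (1 / Real.Gamma (1 - α)) * (v 0 * t₀ ^ (-α) + JJ α (deriv v) t₀) := by
  have hev : (fun t => (1 / Real.Gamma (1 - α)) * ∫ θ in (0:ℝ)..t, v θ / (t - θ) ^ α)
      =ᶠ[𝓝 t₀] fun t => (1 / Real.Gamma (1 - α)) * JJ α v t := by
    filter_upwards [Ioi_mem_nhds h0] with t ht
    rw [div_to_mul α v (le_of_lt ht)]
  rw [leftRL, hev.deriv_eq]
  exact ((hasDerivAt_J hα0 hα1 hv h0 h2).const_mul ((1:ℝ) / Real.Gamma (1 - α))).deriv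

lemma hasDerivAt_leftRL (hα0 : 0 < α) (hα1 : α < 1) {v : ℝ → ℝ}
    (hv : ContDiff ℝ (⊤ : ℕ∞) v) (hv0 : v 0 = 0) {t₀ : ℝ} (h0 : 0 < t₀) (h2 : t₀ < 2) :
    HasDerivAt (leftRL α 0 v) (leftRL α 0 (deriv v) t₀) t₀ := by
  have hv' : ContDiff ℝ (⊤ : ℕ∞) (deriv v) := (contDiff_infty_iff_deriv.mp hv).2
  have hW : HasDerivAt (fun t => (1 / Real.Gamma (1 - α)) * JJ α (deriv v) t)
      ((1 / Real.Gamma (1 - α)) * (deriv v 0 * t₀ ^ (-α) + JJ α (deriv (deriv v)) t₀)) t₀ :=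
    (hasDerivAt_J hα0 hα1 hv' h0 h2).const_mul _
  have hev : leftRL α 0 v =ᶠ[𝓝 t₀] fun t => (1 / Real.Gamma (1 - α)) * JJ α (deriv v) t := by
    filter_upwards [Ioo_mem_nhds h0 h2] with t ht
    rw [leftRL_repr hα0 hα1 hv ht.1 ht.2, hv0]
    ring
  have := hW.congr_of_eventuallyEq hev
  rwa [← leftRL_repr hα0 hα1 hv' h0 h2] at this

lemma J_bound (hα0 : 0 < α) (hα1 : α < 1) {v : ℝ → ℝ} (hv : ContDiff ℝ (⊤ : ℕ∞) v) :
    ∃ C : ℝ, 0 ≤ C ∧ ∀ s ∈ Ioc (0:ℝ) 1, |JJ α v s| ≤ C * s ^ (1 - α) := by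
  have h1a : (0:ℝ) < 1 - α := by linarith
  obtain ⟨M, hM⟩ := (isCompact_Icc (a := (0:ℝ)) (b := 1)).exists_bound_of_continuousOn
    (hv.continuous_deriv (by norm_num)).continuousOn
  have hM0 : 0 ≤ M := le_trans (norm_nonneg _) (hM 0 (by norm_num))
  refine ⟨(|v 0| + M) / (1 - α), by positivity, ?_⟩
  intro s hs
  have hX : (0:ℝ) ≤ s ^ (1 - α) := Real.rpow_nonneg hs.1.le _
  have hrepr := step hv (show (-1:ℝ) < -α by linarith) hs.1.le
  simp only [show -α + 1 = 1 - α from by ring] at hrepr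
  have hI : |∫ ρ in (0:ℝ)..s, deriv v ρ * (s - ρ) ^ (1 - α)| ≤ M * s ^ (1 - α) * s := by
    have := intervalIntegral.norm_integral_le_of_norm_le_const
      (C := M * s ^ (1 - α)) (f := fun ρ => deriv v ρ * (s - ρ) ^ (1 - α))
      (a := 0) (b := s) ?_
    · rw [Real.norm_eq_abs] at this
      calc |∫ ρ in (0:ℝ)..s, deriv v ρ * (s - ρ) ^ (1 - α)| ≤ M * s ^ (1 - α) * |s - 0| := this
        _ = M * s ^ (1 - α) * s := by rw [sub_zero, abs_of_pos hs.1]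
    · intro ρ hρ
      rw [uIoc_of_le hs.1.le] at hρ
      rw [Real.norm_eq_abs, abs_mul]
      have hb1 : |deriv v ρ| ≤ M := by
        simpa using hM ρ ⟨hρ.1.le, le_trans hρ.2 hs.2⟩
      have hb2 : |(s - ρ) ^ (1 - α)| ≤ s ^ (1 - α) := by
        rw [abs_of_nonneg (Real.rpow_nonneg (by linarith [hρ.2]) _)]
        exact Real.rpow_le_rpow (by linarith [hρ.2]) (by linarith [hρ.1]) h1a.le
      exact mul_le_mul hb1 hb2 (abs_nonneg _) hM0
  show |∫ θ in (0:ℝ)..s, v θ * (s - θ) ^ (-α)| ≤ (|v 0| + M) / (1 - α) * s ^ (1 - α)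
  rw [hrepr]
  have h2 : |v 0 * s ^ (1 - α) / (1 - α)| = |v 0| * s ^ (1 - α) / (1 - α) := by
    rw [abs_div, abs_mul, abs_of_pos h1a, abs_of_nonneg hX]
  calc |v 0 * s ^ (1 - α) / (1 - α) + 1 / (1 - α) * ∫ ρ in (0:ℝ)..s, deriv v ρ * (s - ρ) ^ (1 - α)|
      ≤ |v 0 * s ^ (1 - α) / (1 - α)| + |1 / (1 - α) * ∫ ρ in (0:ℝ)..s, deriv v ρ * (s - ρ) ^ (1 - α)| :=
        abs_add_le _ _
    _ = |v 0| * s ^ (1 - α) / (1 - α)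
        + (1 / (1 - α)) * |∫ ρ in (0:ℝ)..s, deriv v ρ * (s - ρ) ^ (1 - α)| := by
        rw [h2, abs_mul, abs_of_pos (by positivity : (0:ℝ) < 1 / (1 - α))]
    _ ≤ |v 0| * s ^ (1 - α) / (1 - α) + (1 / (1 - α)) * (M * s ^ (1 - α) * s) := by
        have : (0:ℝ) < 1 / (1 - α) := by positivity
        nlinarith [hI]
    _ ≤ (|v 0| + M) / (1 - α) * s ^ (1 - α) := by
        have key : M * s ^ (1 - α) * s ≤ M * s ^ (1 - α) := by
          nlinarith [mul_nonneg hM0 hX, hs.2, hs.1.le]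
        have e : |v 0| * s ^ (1 - α) / (1 - α) + 1 / (1 - α) * (M * s ^ (1 - α) * s)
            = (|v 0| * s ^ (1 - α) + M * s ^ (1 - α) * s) / (1 - α) := by ring
        rw [e, div_mul_eq_mul_div, div_le_div_iff_of_pos_right h1a]
        nlinarith [key]

/-- fractional conservation law for the fractional oscillator with Lagrangian
`L = (1/2)(₀D_t^α u)² - ω² u²/2` on `[0,1]`. -/
theorem stmt_13
    (α ω : ℝ) (hα : 0 < α ∧ α < 1)
    (u : ℝ → ℝ) (hu : ContDiff ℝ (⊤ : ℕ∞) u)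
    (hu0 : u 0 = 0) (hu1 : deriv u 0 = 1)
    -- `u` solves the fractional Euler–Lagrange equation `ω² u - ₜD_1^α(₀D_t^α u) = 0`
    (hEL : ∀ t ∈ Set.Ioo (0 : ℝ) 1,
      ω ^ 2 * u t - rightRL α 1 (leftRL α 0 u) t = 0) :
    ∃ c : ℝ, ∀ t ∈ Set.Ioo (0 : ℝ) 1,
      (1 / 2) * (leftRL α 0 u t) ^ 2 - ω ^ 2 * (u t) ^ 2 / 2
        + (∫ s in (0 : ℝ)..t,
            - leftRL α 0 (deriv u) s * leftRL α 0 u s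
              + deriv u s * rightRL α 1 (leftRL α 0 u) s) = c := by
  obtain ⟨hα0, hα1⟩ := hα
  have h1a : (0:ℝ) < 1 - α := by linarith
  have hu' : ContDiff ℝ (⊤ : ℕ∞) (deriv u) := (contDiff_infty_iff_deriv.mp hu).2
  have hu'' : ContDiff ℝ (⊤ : ℕ∞) (deriv (deriv u)) := (contDiff_infty_iff_deriv.mp hu').2
  set cΓ : ℝ := 1 / Real.Gamma (1 - α) with hcΓ
  -- identities on Ioo 0 1
  have HL : ∀ t ∈ Ioo (0:ℝ) 1, leftRL α 0 u t = cΓ * JJ α (deriv u) t := by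
    intro t ht
    rw [leftRL_repr hα0 hα1 hu ht.1 (by linarith [ht.2]), hu0]
    ring
  have HL' : ∀ t ∈ Ioo (0:ℝ) 1,
      leftRL α 0 (deriv u) t = cΓ * (deriv u 0 * t ^ (-α) + JJ α (deriv (deriv u)) t) :=
    fun t ht => leftRL_repr hα0 hα1 hu' ht.1 (by linarith [ht.2])
  have HR : ∀ t ∈ Ioo (0:ℝ) 1, rightRL α 1 (leftRL α 0 u) t = ω ^ 2 * u t :=
    fun t ht => by linarith [hEL t ht]
  have HD : ∀ t ∈ Ioo (0:ℝ) 1, HasDerivAt (leftRL α 0 u) (leftRL α 0 (deriv u) t) t :=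
    fun t ht => hasDerivAt_leftRL hα0 hα1 hu hu0 ht.1 (by linarith [ht.2])
  -- the integrand, rewritten
  set G : ℝ → ℝ := fun s =>
      (-(cΓ * cΓ * deriv u 0)) * (s ^ (-α) * JJ α (deriv u) s)
      + (-(cΓ * cΓ)) * (JJ α (deriv (deriv u)) s * JJ α (deriv u) s)
      + deriv u s * (ω ^ 2 * u s) with hG
  have hgG : ∀ s ∈ Ioo (0:ℝ) 1,
      (- leftRL α 0 (deriv u) s * leftRL α 0 u s
        + deriv u s * rightRL α 1 (leftRL α 0 u) s) = G s := by
    intro s hs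
    rw [HL s hs, HL' s hs, HR s hs, hG]
    ring
  -- continuity of G on Ioo 0 1
  have hJ1c : ∀ s ∈ Ioo (0:ℝ) 1, ContinuousAt (JJ α (deriv u)) s :=
    fun s hs => (hasDerivAt_J hα0 hα1 hu' hs.1 (by linarith [hs.2])).continuousAt
  have hJ2c : ∀ s ∈ Ioo (0:ℝ) 1, ContinuousAt (JJ α (deriv (deriv u))) s :=
    fun s hs => (hasDerivAt_J hα0 hα1 hu'' hs.1 (by linarith [hs.2])).continuousAt
  have hGc : ∀ s ∈ Ioo (0:ℝ) 1, ContinuousAt G s := by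
    intro s hs
    have hr : ContinuousAt (fun x : ℝ => x ^ (-α)) s :=
      Real.continuousAt_rpow_const s (-α) (Or.inl hs.1.ne')
    exact ((continuousAt_const.mul (hr.mul (hJ1c s hs))).add
      (continuousAt_const.mul ((hJ2c s hs).mul (hJ1c s hs)))).add
      ((hu'.continuous.continuousAt).mul
        (continuousAt_const.mul hu.continuous.continuousAt))
  -- integrability of G on [0, t] for t ∈ Ioo 0 1
  obtain ⟨C1, hC1n, hC1⟩ := J_bound hα0 hα1 hu'
  obtain ⟨C2, hC2n, hC2⟩ := J_bound hα0 hα1 hu''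
  have hGint : ∀ t ∈ Ioo (0:ℝ) 1, IntervalIntegrable G volume 0 t := by
    intro t ht
    have hX : IntervalIntegrable (fun s : ℝ => s ^ (-α) * JJ α (deriv u) s) volume 0 t := by
      rw [intervalIntegrable_iff_integrableOn_Ioc_of_le ht.1.le]
      have hmeas : AEStronglyMeasurable (fun s : ℝ => s ^ (-α) * JJ α (deriv u) s)
          (volume.restrict (Ioc 0 t)) := by
        refine (continuousOn_of_forall_continuousAt ?_).aestronglyMeasurable measurableSet_Ioc
        intro s hs
        have hs' : s ∈ Ioo (0:ℝ) 1 := ⟨hs.1, lt_of_le_of_lt hs.2 ht.2⟩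
        exact (Real.continuousAt_rpow_const s (-α) (Or.inl hs.1.ne')).mul (hJ1c s hs')
      have hdom : IntegrableOn (fun s : ℝ => C1 * s ^ (1 - 2*α)) (Ioc 0 t) := by
        have := (intervalIntegrable_rpow' (show (-1:ℝ) < 1 - 2*α by linarith)
          (a := 0) (b := t)).const_mul C1
        rwa [intervalIntegrable_iff_integrableOn_Ioc_of_le ht.1.le] at this
      refine MeasureTheory.Integrable.mono hdom hmeas ?_
      rw [ae_restrict_iff' measurableSet_Ioc]
      filter_upwards with s hs
      have hs' : s ∈ Ioc (0:ℝ) 1 := ⟨hs.1, le_trans hs.2 ht.2.le⟩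
      have hb := hC1 s hs'
      have hnn : (0:ℝ) ≤ s ^ (-α) := Real.rpow_nonneg hs.1.le _
      rw [Real.norm_eq_abs, Real.norm_eq_abs, abs_mul, abs_of_nonneg hnn]
      have e : s ^ (-α) * (C1 * s ^ (1-α)) = C1 * s ^ (1 - 2*α) := by
        rw [show s ^ (-α) * (C1 * s ^ (1-α)) = C1 * (s ^ (1-α) * s ^ (-α)) from by ring,
          ← Real.rpow_add hs.1, show (1-α) + -α = 1 - 2*α by ring]
      calc s ^ (-α) * |JJ α (deriv u) s| ≤ s ^ (-α) * (C1 * s ^ (1-α)) := by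
            exact mul_le_mul_of_nonneg_left hb hnn
        _ = C1 * s ^ (1 - 2*α) := e
        _ ≤ |C1 * s ^ (1 - 2*α)| := le_abs_self _
    have hY : IntervalIntegrable
        (fun s : ℝ => JJ α (deriv (deriv u)) s * JJ α (deriv u) s) volume 0 t := by
      rw [intervalIntegrable_iff_integrableOn_Ioc_of_le ht.1.le]
      have hmeas : AEStronglyMeasurable
          (fun s : ℝ => JJ α (deriv (deriv u)) s * JJ α (deriv u) s)
          (volume.restrict (Ioc 0 t)) := by
        refine (continuousOn_of_forall_continuousAt ?_).aestronglyMeasurable measurableSet_Ioc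
        intro s hs
        have hs' : s ∈ Ioo (0:ℝ) 1 := ⟨hs.1, lt_of_le_of_lt hs.2 ht.2⟩
        exact (hJ2c s hs').mul (hJ1c s hs')
      have hdom : IntegrableOn (fun _ : ℝ => C2 * C1) (Ioc 0 t) := integrableOn_const
        measure_Ioc_lt_top.ne
      refine MeasureTheory.Integrable.mono hdom hmeas ?_
      rw [ae_restrict_iff' measurableSet_Ioc]
      filter_upwards with s hs
      have hs' : s ∈ Ioc (0:ℝ) 1 := ⟨hs.1, le_trans hs.2 ht.2.le⟩
      have hb1 := hC1 s hs'
      have hb2 := hC2 s hs'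
      have hpow : s ^ (1-α) ≤ 1 := Real.rpow_le_one hs.1.le hs'.2 h1a.le
      have hpnn : (0:ℝ) ≤ s ^ (1-α) := Real.rpow_nonneg hs.1.le _
      rw [Real.norm_eq_abs, Real.norm_eq_abs, abs_mul]
      calc |JJ α (deriv (deriv u)) s| * |JJ α (deriv u) s|
          ≤ (C2 * s ^ (1-α)) * (C1 * s ^ (1-α)) :=
            mul_le_mul hb2 hb1 (abs_nonneg _) (by positivity)
        _ = (C2 * C1) * (s ^ (1-α) * s ^ (1-α)) := by ring
        _ ≤ (C2 * C1) * 1 := by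
            refine mul_le_mul_of_nonneg_left ?_ (mul_nonneg hC2n hC1n)
            nlinarith
        _ = C2 * C1 := mul_one _
        _ ≤ |C2 * C1| := le_abs_self _
    have hCc : IntervalIntegrable (fun s : ℝ => deriv u s * (ω ^ 2 * u s)) volume 0 t :=
      (hu'.continuous.mul (continuous_const.mul hu.continuous)).intervalIntegrable _ _
    exact ((hX.const_mul _).add (hY.const_mul _)).add hCc
  -- derivative of the primitive
  set orig : ℝ → ℝ := fun s =>
    - leftRL α 0 (deriv u) s * leftRL α 0 u s
      + deriv u s * rightRL α 1 (leftRL α 0 u) s with horig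
  have hprimEq : ∀ t ∈ Ioo (0:ℝ) 1,
      (∫ s in (0:ℝ)..t, orig s) = ∫ s in (0:ℝ)..t, G s := by
    intro t ht
    apply intervalIntegral.integral_congr_ae
    filter_upwards with s
    intro hs
    rw [uIoc_of_le ht.1.le] at hs
    exact hgG s ⟨hs.1, lt_of_le_of_lt hs.2 ht.2⟩
  have hprimD : ∀ t ∈ Ioo (0:ℝ) 1,
      HasDerivAt (fun t => ∫ s in (0:ℝ)..t, orig s) (G t) t := by
    intro t ht
    have hGm : StronglyMeasurableAtFilter G (𝓝 t) volume :=
      ContinuousAt.stronglyMeasurableAtFilter isOpen_Ioo hGc t ht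
    have hGd : HasDerivAt (fun t => ∫ s in (0:ℝ)..t, G s) (G t) t :=
      intervalIntegral.integral_hasDerivAt_right (hGint t ht) hGm (hGc t ht)
    refine hGd.congr_of_eventuallyEq ?_
    filter_upwards [Ioo_mem_nhds ht.1 ht.2] with x hx
    exact hprimEq x hx
  -- derivative of the full expression
  set E : ℝ → ℝ := fun t =>
    (1 / 2) * (leftRL α 0 u t) ^ 2 - ω ^ 2 * (u t) ^ 2 / 2
      + (∫ s in (0:ℝ)..t, orig s) with hE
  have hEd : ∀ t ∈ Ioo (0:ℝ) 1, HasDerivAt E 0 t := by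
    intro t ht
    have h1 : HasDerivAt (fun t => (1 / 2 : ℝ) * (leftRL α 0 u t) ^ 2)
        (leftRL α 0 (deriv u) t * leftRL α 0 u t) t := by
      have := ((HD t ht).pow 2).const_mul ((1:ℝ)/2)
      refine this.congr_deriv ?_
      simp
      ring
    have hud : HasDerivAt u (deriv u t) t := ((hu.differentiable (by norm_num)) t).hasDerivAt
    have h2 : HasDerivAt (fun t => ω ^ 2 * (u t) ^ 2 / 2)
        (ω ^ 2 * (u t * deriv u t)) t := by
      have := ((hud.pow 2).const_mul (ω ^ 2)).div_const 2
      refine this.congr_deriv ?_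
      simp
      ring
    have h3 := (h1.sub h2).add (hprimD t ht)
    have hGt : G t = - leftRL α 0 (deriv u) t * leftRL α 0 u t
        + deriv u t * (ω ^ 2 * u t) := by
      rw [← hgG t ht, HR t ht]
    refine h3.congr_deriv ?_
    rw [hGt]
    ring
  -- constancy
  have hconst : ∀ x y, x ∈ Ioo (0:ℝ) 1 → y ∈ Ioo (0:ℝ) 1 → x ≤ y → E y = E x := by
    intro x y hx hy hxy
    have hsub : Icc x y ⊆ Ioo (0:ℝ) 1 := fun z hz =>
      ⟨lt_of_lt_of_le hx.1 hz.1, lt_of_le_of_lt hz.2 hy.2⟩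
    exact constant_of_has_deriv_right_zero
      (fun z hz => ((hEd z (hsub hz)).continuousAt).continuousWithinAt)
      (fun z hz => ((hEd z (hsub (Ico_subset_Icc_self hz))).hasDerivWithinAt))
      y (right_mem_Icc.mpr hxy)
  refine ⟨E (1/2), fun t ht => ?_⟩
  have h12 : (1/2 : ℝ) ∈ Ioo (0:ℝ) 1 := by norm_num
  show E t = E (1/2)
  rcases le_total t (1/2 : ℝ) with h | h
  · exact (hconst t (1/2) ht h12 h).symm
  · exact hconst (1/2) t h12 ht h
end

section
/- Let 0<α<1, [a,b] ⊂ (c,d) with −∞<c<d<+∞, and let F ∈ C^∞([a,b]) satisfy F^{(i)}(b) = 0 for all i ∈ ℕ₀, with F extended by zero on (c,d)∖[a,b]. Then for every i ∈ ℕ, the (i−1)-th derivative of the function t ↦ F(t)(t−a)^{i−α} is continuous at t = a and at t = b, and for every i ∈ ℕ₀ the i-th derivative of this function is integrable on (c,d) and supported in [a,b]. -/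
open MeasureTheory Filter Set Topology

variable {a b : ℝ} {F : ℝ → ℝ}

lemma zero_prop {u : ℝ → ℝ} {U : Set ℝ} (hU : IsOpen U) (h : ∀ t ∈ U, u t = 0)
    (j : ℕ) : ∀ t ∈ U, iteratedDeriv j u t = 0 := by
  induction j with
  | zero => simpa using h
  | succ j ih =>
    intro t ht
    rw [iteratedDeriv_succ]
    have hev : iteratedDeriv j u =ᶠ[𝓝 t] (fun _ => (0 : ℝ)) :=
      Filter.eventuallyEq_of_mem (hU.mem_nhds ht) (fun s hs => ih s hs)
    rw [hev.deriv_eq]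
    simp


lemma fk_hasDerivAt (hab : a < b) (hF : ContDiffOn ℝ (⊤ : ℕ∞) F (Set.Icc a b))
    (k : ℕ) {t : ℝ} (ht : t ∈ Set.Ioo a b) :
    HasDerivAt (iteratedDerivWithin k F (Set.Icc a b))
      (iteratedDerivWithin (k + 1) F (Set.Icc a b) t) t := by
  have hu : UniqueDiffOn ℝ (Set.Icc a b) := uniqueDiffOn_Icc hab
  have hmem : Set.Icc a b ∈ 𝓝 t := Icc_mem_nhds ht.1 ht.2
  have hd : DifferentiableWithinAt ℝ (iteratedDerivWithin k F (Set.Icc a b)) (Set.Icc a b) t :=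
    hF.differentiableOn_iteratedDerivWithin (by exact_mod_cast lt_top_iff_ne_top.2 (by simp)) hu
      t (Set.mem_Icc_of_Ioo ht)
  have hda : DifferentiableAt ℝ (iteratedDerivWithin k F (Set.Icc a b)) t :=
    hd.differentiableAt hmem
  have : iteratedDerivWithin (k + 1) F (Set.Icc a b) t
      = deriv (iteratedDerivWithin k F (Set.Icc a b)) t := by
    rw [iteratedDerivWithin_succ, derivWithin_of_mem_nhds hmem]
  rw [this]
  exact hda.hasDerivAt

lemma rpow_hasDerivAt {a t : ℝ} (ht : a < t) (e : ℝ) :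
    HasDerivAt (fun s => (s - a) ^ e) (e * (t - a) ^ (e - 1)) t := by
  have h1 : HasDerivAt (fun s : ℝ => s - a) 1 t := (hasDerivAt_id t).sub_const a
  have h2 : HasDerivAt (fun x : ℝ => x ^ e) (e * (t - a) ^ (e - 1)) (t - a) := by
    simpa using Real.hasDerivAt_rpow_const (x := t - a) (p := e) (Or.inl (by linarith))
  have h3 := h2.comp t h1
  rw [mul_one] at h3
  exact h3

lemma formula (hab : a < b) (hF : ContDiffOn ℝ (⊤ : ℕ∞) F (Set.Icc a b))
    (r : ℝ) (j : ℕ) :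
    ∃ c : ℕ → ℝ, (∀ k, j < k → c k = 0) ∧ ∀ t ∈ Set.Ioo a b,
      iteratedDeriv j (fun s => F s * (s - a) ^ r) t =
        ∑ k ∈ Finset.range (j + 1),
          c k * iteratedDerivWithin k F (Set.Icc a b) t * (t - a) ^ (r - j + k) := by
  induction j with
  | zero =>
    refine ⟨fun k => if k = 0 then 1 else 0, fun k hk => if_neg (by omega), ?_⟩
    intro t ht
    simp
  | succ j ih =>
    obtain ⟨c, hc0, hc⟩ := ih
    refine ⟨fun k => c k * (r - j + k) + (if k = 0 then 0 else c (k - 1)), ?_, ?_⟩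
    · intro k hk
      have h1 : c k = 0 := hc0 k (by omega)
      have h2 : k ≠ 0 := by omega
      have h3 : c (k - 1) = 0 := hc0 (k - 1) (by omega)
      simp [h1, h2, h3]
    · intro t ht
      have hmem : Set.Ioo a b ∈ 𝓝 t := isOpen_Ioo.mem_nhds ht
      have hev : iteratedDeriv j (fun s => F s * (s - a) ^ r) =ᶠ[𝓝 t]
          (fun s => ∑ k ∈ Finset.range (j + 1),
            c k * iteratedDerivWithin k F (Set.Icc a b) s * (s - a) ^ (r - j + k)) :=
        Filter.eventuallyEq_of_mem hmem (fun s hs => hc s hs)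
      have hder : ∀ k ∈ Finset.range (j + 1), HasDerivAt
          (fun s => c k * iteratedDerivWithin k F (Set.Icc a b) s * (s - a) ^ (r - j + k))
          (c k * (iteratedDerivWithin (k + 1) F (Set.Icc a b) t * (t - a) ^ (r - j + k)
            + iteratedDerivWithin k F (Set.Icc a b) t
              * ((r - j + k) * (t - a) ^ (r - j + k - 1)))) t := by
        intro k _
        have h := ((fk_hasDerivAt hab hF k ht).mul
          (rpow_hasDerivAt ht.1 (r - j + k))).const_mul (c k)
        simpa [mul_assoc] using h
      have hS := HasDerivAt.fun_sum hder
      rw [iteratedDeriv_succ, hev.deriv_eq, hS.deriv]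
      -- now pure algebra
      have hsplit : ∀ k : ℕ,
          c k * (iteratedDerivWithin (k + 1) F (Set.Icc a b) t * (t - a) ^ (r - j + k)
            + iteratedDerivWithin k F (Set.Icc a b) t
              * ((r - j + k) * (t - a) ^ (r - j + k - 1)))
          = c k * iteratedDerivWithin (k + 1) F (Set.Icc a b) t * (t - a) ^ (r - j + k)
            + c k * (r - j + k) * iteratedDerivWithin k F (Set.Icc a b) t
              * (t - a) ^ (r - j + k - 1) := by
        intro k; ring
      simp only [hsplit, Finset.sum_add_distrib]
      have hrhs : ∀ k : ℕ,
          (c k * (r - j + k) + (if k = 0 then 0 else c (k - 1)))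
            * iteratedDerivWithin k F (Set.Icc a b) t * (t - a) ^ (r - (j + 1 : ℕ) + k)
          = c k * (r - j + k) * iteratedDerivWithin k F (Set.Icc a b) t
              * (t - a) ^ (r - (j + 1 : ℕ) + k)
            + (if k = 0 then 0 else c (k - 1)) * iteratedDerivWithin k F (Set.Icc a b) t
              * (t - a) ^ (r - (j + 1 : ℕ) + k) := by
        intro k; ring
      simp only [hrhs, Finset.sum_add_distrib]
      have e1 : ∀ k : ℕ, r - (j + 1 : ℕ) + (k : ℝ) = r - j + k - 1 := by
        intro k; push_cast; ring
      have e2 : ∀ k : ℕ, r - (j + 1 : ℕ) + ((k : ℕ) + 1 : ℕ) = r - j + k := by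
        intro k; push_cast; ring
      refine (add_comm _ _).trans ?_
      congr 1
      · -- second LHS sum vs first RHS sum
        rw [Finset.sum_range_succ (n := j + 1), hc0 (j + 1) (lt_add_one j)]
        simp only [zero_mul, add_zero]
        refine Finset.sum_congr rfl fun k hk => ?_
        rw [e1 k]
      · -- first LHS sum vs second RHS sum
        have hsucc := Finset.sum_range_succ' (fun k => (if k = 0 then (0:ℝ) else c (k - 1))
          * iteratedDerivWithin k F (Set.Icc a b) t
          * (t - a) ^ (r - ((j + 1 : ℕ) : ℝ) + (k : ℝ))) (j + 1)
        rw [hsucc]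
        norm_num
        refine Finset.sum_congr rfl fun k hk => ?_
        congr 1
        push_cast
        ring

-- sup bound of iterated derivatives of F on Icc
lemma fk_bound (hab : a < b) (hF : ContDiffOn ℝ (⊤ : ℕ∞) F (Set.Icc a b)) (k : ℕ) :
    ∃ M : ℝ, 0 ≤ M ∧ ∀ t ∈ Set.Icc a b, |iteratedDerivWithin k F (Set.Icc a b) t| ≤ M := by
  obtain ⟨C, hC⟩ := isCompact_Icc.exists_bound_of_continuousOn
    (hF.continuousOn_iteratedDerivWithin (by exact_mod_cast le_top) (uniqueDiffOn_Icc hab))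
  exact ⟨max C 0, le_max_right _ _, fun t ht => (hC t ht).trans (le_max_left _ _)⟩

lemma fk_hasDerivWithinAt (hab : a < b) (hF : ContDiffOn ℝ (⊤ : ℕ∞) F (Set.Icc a b))
    (k : ℕ) {t : ℝ} (ht : t ∈ Set.Icc a b) :
    HasDerivWithinAt (iteratedDerivWithin k F (Set.Icc a b))
      (iteratedDerivWithin (k + 1) F (Set.Icc a b) t) (Set.Icc a b) t := by
  have hu : UniqueDiffOn ℝ (Set.Icc a b) := uniqueDiffOn_Icc hab
  have hd : DifferentiableWithinAt ℝ (iteratedDerivWithin k F (Set.Icc a b)) (Set.Icc a b) t :=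
    hF.differentiableOn_iteratedDerivWithin (by exact_mod_cast lt_top_iff_ne_top.2 (by simp)) hu
      t ht
  have h := hd.hasDerivWithinAt
  rwa [← iteratedDerivWithin_succ] at h

-- quadratic vanishing at b
lemma fk_bound_b2 (hab : a < b) (hF : ContDiffOn ℝ (⊤ : ℕ∞) F (Set.Icc a b))
    (hFb : ∀ i : ℕ, iteratedDerivWithin i F (Set.Icc a b) b = 0) (k : ℕ) :
    ∃ M : ℝ, 0 ≤ M ∧ ∀ t ∈ Set.Icc a b,
      |iteratedDerivWithin k F (Set.Icc a b) t| ≤ M * (b - t) ^ 2 := by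
  -- first linear bound for k+1
  obtain ⟨M, hM0, hM⟩ := fk_bound hab hF (k + 2)
  have lin : ∀ t ∈ Set.Icc a b,
      |iteratedDerivWithin (k + 1) F (Set.Icc a b) t| ≤ M * (b - t) := by
    intro t ht
    have := Convex.norm_image_sub_le_of_norm_hasDerivWithin_le
      (f := iteratedDerivWithin (k + 1) F (Set.Icc a b))
      (f' := iteratedDerivWithin (k + 2) F (Set.Icc a b))
      (fun x hx => fk_hasDerivWithinAt hab hF (k + 1) hx)
      (fun x hx => hM x hx) (convex_Icc a b) (right_mem_Icc.2 hab.le) ht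
    rw [hFb (k + 1)] at this
    simpa [abs_of_nonpos (by linarith [ht.2] : t - b ≤ 0)] using this
  refine ⟨M, hM0, fun t ht => ?_⟩
  have hsub : Set.Icc t b ⊆ Set.Icc a b := Set.Icc_subset_Icc ht.1 le_rfl
  have := Convex.norm_image_sub_le_of_norm_hasDerivWithin_le
    (f := iteratedDerivWithin k F (Set.Icc a b))
    (f' := iteratedDerivWithin (k + 1) F (Set.Icc a b))
    (fun x hx => (fk_hasDerivWithinAt hab hF k (hsub hx)).mono hsub)
    (fun x hx => by
      calc |iteratedDerivWithin (k + 1) F (Set.Icc a b) x| ≤ M * (b - x) := lin x (hsub hx)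
        _ ≤ M * (b - t) := by nlinarith [hx.1] )
    (convex_Icc t b) (right_mem_Icc.2 ht.2) (left_mem_Icc.2 ht.2)
  rw [hFb k] at this
  have h2 : |t - b| = b - t := by rw [abs_of_nonpos (by linarith [ht.2] : t - b ≤ 0)]; ring
  rw [Real.norm_eq_abs, Real.norm_eq_abs, h2] at this
  calc |iteratedDerivWithin k F (Set.Icc a b) t|
      = |iteratedDerivWithin k F (Set.Icc a b) t - 0| := by rw [sub_zero]
    _ ≤ M * (b - t) * (b - t) := this
    _ = M * (b - t) ^ 2 := by ring

lemma keyA (hab : a < b) (hF : ContDiffOn ℝ (⊤ : ℕ∞) F (Set.Icc a b)) (r : ℝ) (j : ℕ) :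
    ∃ C : ℝ, 0 ≤ C ∧ ∀ t ∈ Set.Ioo a b,
      |iteratedDeriv j (fun s => F s * (s - a) ^ r) t| ≤ C * (t - a) ^ (r - j) := by
  obtain ⟨c, hc0, hc⟩ := formula hab hF r j
  choose M hM0 hM using fun k => fk_bound hab hF k
  refine ⟨∑ k ∈ Finset.range (j + 1), |c k| * M k * max 1 (b - a) ^ k, ?_, ?_⟩
  · refine Finset.sum_nonneg fun k _ => ?_
    have := hM0 k
    positivity
  · intro t ht
    have hta : (0 : ℝ) < t - a := by linarith [ht.1]
    rw [hc t ht, Finset.sum_mul]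
    refine (Finset.abs_sum_le_sum_abs _ _).trans (Finset.sum_le_sum fun k hk => ?_)
    have hsplit : (t - a) ^ (r - j + k) = (t - a) ^ (r - j) * (t - a) ^ k := by
      rw [Real.rpow_add hta, Real.rpow_natCast]
    have habs : |(t - a) ^ (r - j + k)| = (t - a) ^ (r - j + k) :=
      abs_of_nonneg (Real.rpow_nonneg hta.le _)
    rw [abs_mul, abs_mul, habs, hsplit]
    calc |c k| * |iteratedDerivWithin k F (Set.Icc a b) t| * ((t - a) ^ (r - j) * (t - a) ^ k)
        = |c k| * |iteratedDerivWithin k F (Set.Icc a b) t| * (t - a) ^ k * (t - a) ^ (r - j) := by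
          ring
      _ ≤ |c k| * M k * max 1 (b - a) ^ k * (t - a) ^ (r - j) := by
          have h1 : |iteratedDerivWithin k F (Set.Icc a b) t| ≤ M k :=
            hM k t (Set.mem_Icc_of_Ioo ht)
          have h2 : (t - a) ≤ max 1 (b - a) := le_trans (by linarith [ht.2]) (le_max_right _ _)
          have h3 : (0:ℝ) ≤ (t - a) ^ (r - j) := Real.rpow_nonneg hta.le _
          have h0 := hM0 k
          have h4 : (0:ℝ) ≤ t - a := hta.le
          gcongr <;> first | positivity | assumption

lemma keyB (hab : a < b) (hF : ContDiffOn ℝ (⊤ : ℕ∞) F (Set.Icc a b))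
    (hFb : ∀ i : ℕ, iteratedDerivWithin i F (Set.Icc a b) b = 0) (r : ℝ) (j : ℕ) :
    ∃ C : ℝ, 0 ≤ C ∧ ∀ t ∈ Set.Ioo a b, (a + b) / 2 ≤ t →
      |iteratedDeriv j (fun s => F s * (s - a) ^ r) t| ≤ C * (b - t) ^ 2 := by
  obtain ⟨c, hc0, hc⟩ := formula hab hF r j
  choose M hM0 hM using fun k => fk_bound_b2 hab hF hFb k
  set K : ℕ → ℝ := fun k => max (((b - a) / 2) ^ (r - j + k)) ((b - a) ^ (r - j + k)) with hK
  have hK0 : ∀ k, 0 ≤ K k := fun k =>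
    le_trans (Real.rpow_nonneg (by linarith) _) (le_max_left _ _)
  refine ⟨∑ k ∈ Finset.range (j + 1), |c k| * M k * K k, ?_, ?_⟩
  · refine Finset.sum_nonneg fun k _ => ?_
    have h1 := hM0 k; have h2 := hK0 k
    positivity
  · intro t ht hmid
    have hta : (0 : ℝ) < t - a := by linarith [ht.1]
    have htm : (b - a) / 2 ≤ t - a := by linarith
    rw [hc t ht, Finset.sum_mul]
    refine (Finset.abs_sum_le_sum_abs _ _).trans (Finset.sum_le_sum fun k hk => ?_)
    have habs : |(t - a) ^ (r - j + k)| = (t - a) ^ (r - j + k) :=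
      abs_of_nonneg (Real.rpow_nonneg hta.le _)
    have hKb : (t - a) ^ (r - ↑j + ↑k) ≤ K k := by
      rcases le_or_gt 0 (r - ↑j + ↑k) with he | he
      · exact le_trans (Real.rpow_le_rpow hta.le (by linarith [ht.2]) he) (le_max_right _ _)
      · exact le_trans (Real.rpow_le_rpow_of_nonpos (by linarith) htm he.le) (le_max_left _ _)
    rw [abs_mul, abs_mul, habs]
    calc |c k| * |iteratedDerivWithin k F (Set.Icc a b) t| * (t - a) ^ (r - ↑j + ↑k)
        ≤ |c k| * (M k * (b - t) ^ 2) * K k := by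
          have h1 := hM k t (Set.mem_Icc_of_Ioo ht)
          have h2 : (0:ℝ) ≤ (b - t) ^ 2 := sq_nonneg _
          have h0 := hM0 k
          have h3 : (0:ℝ) ≤ (t - a) ^ (r - ↑j + ↑k) := Real.rpow_nonneg hta.le _
          gcongr <;> first | positivity | assumption
      _ = |c k| * M k * K k * (b - t) ^ 2 := by ring

lemma contOn (hab : a < b) (hF : ContDiffOn ℝ (⊤ : ℕ∞) F (Set.Icc a b)) (r : ℝ) (j : ℕ) :
    ContinuousOn (iteratedDeriv j (fun s => F s * (s - a) ^ r)) (Set.Ioo a b) := by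
  obtain ⟨c, hc0, hc⟩ := formula hab hF r j
  have hS : ContinuousOn (fun t => ∑ k ∈ Finset.range (j + 1),
      c k * iteratedDerivWithin k F (Set.Icc a b) t * (t - a) ^ (r - j + k)) (Set.Ioo a b) := by
    refine continuousOn_finset_sum _ fun k _ => ?_
    have h1 : ContinuousOn (iteratedDerivWithin k F (Set.Icc a b)) (Set.Ioo a b) :=
      (hF.continuousOn_iteratedDerivWithin (by exact_mod_cast le_top)
        (uniqueDiffOn_Icc hab)).mono Set.Ioo_subset_Icc_self
    have h2 : ContinuousOn (fun t : ℝ => (t - a) ^ (r - j + k)) (Set.Ioo a b) := by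
      intro t ht
      have hne : t - a ≠ 0 := sub_ne_zero.2 (ne_of_gt ht.1)
      have hc1 : ContinuousAt (fun t : ℝ => t - a) t := by fun_prop
      exact (hc1.rpow_const (Or.inl hne)).continuousWithinAt
    exact (continuousOn_const.mul h1).mul h2
  exact hS.congr fun t ht => hc t ht

lemma tendsto_abs_rpow (x C : ℝ) {p : ℝ} (hp : 0 < p) :
    Tendsto (fun t => C * |t - x| ^ p) (𝓝 x) (𝓝 0) := by
  have h1 : Tendsto (fun t : ℝ => |t - x|) (𝓝 x) (𝓝 0) := by
    have hc : ContinuousAt (fun t : ℝ => |t - x|) x := by fun_prop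
    have := hc.tendsto
    simpa using this
  have h2 : ContinuousAt (fun y : ℝ => y ^ p) 0 := Real.continuousAt_rpow_const 0 p (Or.inr hp.le)
  have h3 : Tendsto (fun t => |t - x| ^ p) (𝓝 x) (𝓝 ((0:ℝ) ^ p)) := h2.tendsto.comp h1
  rw [Real.zero_rpow hp.ne'] at h3
  simpa using h3.const_mul C

lemma tendsto_abs_lin (x C : ℝ) : Tendsto (fun t => C * |t - x|) (𝓝 x) (𝓝 0) := by
  have h1 : Tendsto (fun t : ℝ => |t - x|) (𝓝 x) (𝓝 0) := by
    have hc : ContinuousAt (fun t : ℝ => |t - x|) x := by fun_prop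
    have := hc.tendsto
    simpa using this
  simpa using h1.const_mul C

lemma hasDerivAt_b {d : ℝ} (hab : a < b) (hbd : b < d)
    (hF : ContDiffOn ℝ (⊤ : ℕ∞) F (Set.Icc a b))
    (hFb : ∀ i : ℕ, iteratedDerivWithin i F (Set.Icc a b) b = 0) (r : ℝ) (j : ℕ)
    (hright : ∀ t ∈ Set.Ioo b d, iteratedDeriv j (fun s => F s * (s - a) ^ r) t = 0)
    (hval : iteratedDeriv j (fun s => F s * (s - a) ^ r) b = 0) :
    HasDerivAt (iteratedDeriv j (fun s => F s * (s - a) ^ r)) 0 b := by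
  obtain ⟨C, hC0, hC⟩ := keyB hab hF hFb r j
  rw [hasDerivAt_iff_tendsto_slope]
  refine squeeze_zero_norm' ?_ ((tendsto_abs_lin b C).mono_left nhdsWithin_le_nhds)
  have hmem : Set.Ioo ((a + b) / 2) d ∈ 𝓝[≠] b :=
    mem_nhdsWithin_of_mem_nhds (Ioo_mem_nhds (by linarith) hbd)
  filter_upwards [hmem, self_mem_nhdsWithin] with t htm htne
  have hslope : slope (iteratedDeriv j (fun s => F s * (s - a) ^ r)) b t
      = iteratedDeriv j (fun s => F s * (s - a) ^ r) t / (t - b) := by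
    rw [slope_def_field, hval, sub_zero]
  rcases lt_or_ge t b with h | h
  · have htab : t ∈ Set.Ioo a b := ⟨by linarith [htm.1], h⟩
    have hb := hC t htab htm.1.le
    have habs : |t - b| = b - t := by
      rw [abs_of_nonpos (by linarith : t - b ≤ 0)]; ring
    rw [Real.norm_eq_abs, hslope, abs_div, habs]
    rw [div_le_iff₀ (by linarith : (0:ℝ) < b - t)]
    exact hb.trans_eq (by ring)
  · have hbt : b < t := lt_of_le_of_ne h (Ne.symm (by simpa using htne))
    have h0 : iteratedDeriv j (fun s => F s * (s - a) ^ r) t = 0 := hright t ⟨hbt, htm.2⟩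
    rw [Real.norm_eq_abs, hslope, h0, zero_div, abs_zero]
    positivity

lemma hasDerivAt_a {c : ℝ} (hca : c < a) (hab : a < b)
    (hF : ContDiffOn ℝ (⊤ : ℕ∞) F (Set.Icc a b)) (r : ℝ) (j : ℕ)
    (hp : 0 < r - j - 1)
    (hleft : ∀ t ∈ Set.Ioo c a, iteratedDeriv j (fun s => F s * (s - a) ^ r) t = 0)
    (hval : iteratedDeriv j (fun s => F s * (s - a) ^ r) a = 0) :
    HasDerivAt (iteratedDeriv j (fun s => F s * (s - a) ^ r)) 0 a := by
  obtain ⟨C, hC0, hC⟩ := keyA hab hF r j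
  rw [hasDerivAt_iff_tendsto_slope]
  refine squeeze_zero_norm' ?_ ((tendsto_abs_rpow a C hp).mono_left nhdsWithin_le_nhds)
  have hmem : Set.Ioo c b ∈ 𝓝[≠] a :=
    mem_nhdsWithin_of_mem_nhds (Ioo_mem_nhds hca hab)
  filter_upwards [hmem, self_mem_nhdsWithin] with t htm htne
  have hslope : slope (iteratedDeriv j (fun s => F s * (s - a) ^ r)) a t
      = iteratedDeriv j (fun s => F s * (s - a) ^ r) t / (t - a) := by
    rw [slope_def_field, hval, sub_zero]
  rcases lt_or_ge t a with h | h
  · have h0 : iteratedDeriv j (fun s => F s * (s - a) ^ r) t = 0 := hleft t ⟨htm.1, h⟩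
    rw [Real.norm_eq_abs, hslope, h0, zero_div, abs_zero]
    positivity
  · have hat : a < t := lt_of_le_of_ne h (Ne.symm (by simpa using htne))
    have hta : (0:ℝ) < t - a := by linarith
    have hb := hC t ⟨hat, htm.2⟩
    have habs : |t - a| = t - a := abs_of_pos hta
    rw [Real.norm_eq_abs, hslope, abs_div, habs, div_le_iff₀ hta]
    refine hb.trans_eq ?_
    rw [show r - (j:ℝ) = (r - ↑j - 1) + 1 by ring, Real.rpow_add hta, Real.rpow_one]
    ring

/-- part (i) of Proposition 4.2 — regularity and integrability of the
derivatives of `t ↦ F(t)(t-a)^(i-α)` for `F` smooth on `[a,b]`, vanishing with all its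
derivatives at `b`, and extended by zero on `(c,d) ∖ [a,b]`. -/
theorem stmt_14
    (α a b c d : ℝ) (hα : 0 < α ∧ α < 1)
    (hca : c < a) (hab : a < b) (hbd : b < d)
    (F : ℝ → ℝ)
    (hF : ContDiffOn ℝ (⊤ : ℕ∞) F (Set.Icc a b))
    (hFb : ∀ i : ℕ, iteratedDerivWithin i F (Set.Icc a b) b = 0)
    (hFext : ∀ t ∈ Set.Ioo c d \ Set.Icc a b, F t = 0) :
    (∀ i : ℕ, 1 ≤ i →
      ContinuousAt (iteratedDeriv (i - 1) (fun t => F t * (t - a) ^ ((i : ℝ) - α))) a ∧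
      ContinuousAt (iteratedDeriv (i - 1) (fun t => F t * (t - a) ^ ((i : ℝ) - α))) b)
    ∧
    (∀ i : ℕ,
      MeasureTheory.IntegrableOn
        (iteratedDeriv i (fun t => F t * (t - a) ^ ((i : ℝ) - α))) (Set.Ioo c d) ∧
      ∀ t ∈ Set.Ioo c d \ Set.Icc a b,
        iteratedDeriv i (fun t => F t * (t - a) ^ ((i : ℝ) - α)) t = 0) := by
  obtain ⟨hα0, hα1⟩ := hα
  have hleft : ∀ (r : ℝ) (j : ℕ), ∀ t ∈ Set.Ioo c a,
      iteratedDeriv j (fun s => F s * (s - a) ^ r) t = 0 := by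
    intro r j
    refine zero_prop isOpen_Ioo (fun s hs => ?_) j
    rw [hFext s ⟨⟨hs.1, lt_trans (lt_trans hs.2 hab) hbd⟩,
      fun hm => absurd hm.1 (not_le.2 hs.2)⟩, zero_mul]
  have hright : ∀ (r : ℝ) (j : ℕ), ∀ t ∈ Set.Ioo b d,
      iteratedDeriv j (fun s => F s * (s - a) ^ r) t = 0 := by
    intro r j
    refine zero_prop isOpen_Ioo (fun s hs => ?_) j
    rw [hFext s ⟨⟨lt_trans (lt_trans hca hab) hs.1, hs.2⟩,
      fun hm => absurd hm.2 (not_le.2 hs.1)⟩, zero_mul]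
  have hvanish : ∀ (r : ℝ) (j : ℕ), ∀ t ∈ Set.Ioo c d \ Set.Icc a b,
      iteratedDeriv j (fun s => F s * (s - a) ^ r) t = 0 := by
    intro r j t ht
    rcases lt_or_ge t a with h | h
    · exact hleft r j t ⟨ht.1.1, h⟩
    · have hb : b < t := by
        by_contra hbt
        exact ht.2 ⟨h, not_lt.1 hbt⟩
      exact hright r j t ⟨hb, ht.1.2⟩
  have hFb0 : F b = 0 := by
    have := hFb 0
    rwa [iteratedDerivWithin_zero] at this
  have hvalb : ∀ (r : ℝ) (j : ℕ), iteratedDeriv j (fun s => F s * (s - a) ^ r) b = 0 := by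
    intro r j
    induction j with
    | zero => simp [hFb0]
    | succ j ih =>
      rw [iteratedDeriv_succ]
      exact (hasDerivAt_b hab hbd hF hFb r j (hright r j) ih).deriv
  have hderb : ∀ (r : ℝ) (j : ℕ),
      HasDerivAt (iteratedDeriv j (fun s => F s * (s - a) ^ r)) 0 b :=
    fun r j => hasDerivAt_b hab hbd hF hFb r j (hright r j) (hvalb r j)
  constructor
  · intro i hi
    have hr0 : (0:ℝ) < (i : ℝ) - α := by
      have : (1:ℝ) ≤ (i:ℝ) := by exact_mod_cast hi
      linarith
    have hvala : ∀ j : ℕ, j ≤ i - 1 →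
        iteratedDeriv j (fun s => F s * (s - a) ^ ((i : ℝ) - α)) a = 0 := by
      intro j
      induction j with
      | zero =>
        intro _
        simp [Real.zero_rpow hr0.ne']
      | succ j ih =>
        intro hj
        have hp : 0 < ((i:ℝ) - α) - j - 1 := by
          have h2 : j + 2 ≤ i := by omega
          have : (j:ℝ) + 2 ≤ (i:ℝ) := by exact_mod_cast h2
          linarith
        rw [iteratedDeriv_succ]
        exact (hasDerivAt_a hca hab hF ((i:ℝ) - α) j hp (hleft _ j) (ih (by omega))).deriv
    refine ⟨?_, (hderb ((i:ℝ) - α) (i - 1)).continuousAt⟩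
    obtain ⟨C, hC0, hC⟩ := keyA hab hF ((i:ℝ) - α) (i - 1)
    have hp : 0 < ((i:ℝ) - α) - ((i - 1 : ℕ) : ℝ) := by
      rw [Nat.cast_sub hi]
      push_cast
      linarith
    have h0 : Tendsto (iteratedDeriv (i - 1) (fun s => F s * (s - a) ^ ((i : ℝ) - α)))
        (𝓝 a) (𝓝 0) := by
      refine squeeze_zero_norm' ?_ (tendsto_abs_rpow a C hp)
      filter_upwards [Ioo_mem_nhds hca hab] with t htm
      rcases lt_trichotomy t a with h | h | h
      · rw [Real.norm_eq_abs, hleft _ (i - 1) t ⟨htm.1, h⟩, abs_zero]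
        positivity
      · subst h
        rw [Real.norm_eq_abs, hvala (i - 1) le_rfl, abs_zero]
        positivity
      · have hb := hC t ⟨h, htm.2⟩
        rw [Real.norm_eq_abs, abs_of_pos (by linarith : (0:ℝ) < t - a)]
        exact hb
    show Tendsto _ (𝓝 a) (𝓝 _)
    rw [hvala (i - 1) le_rfl]
    exact h0
  · intro i
    refine ⟨?_, fun t ht => hvanish ((i:ℝ) - α) i t ht⟩
    obtain ⟨C, hC0, hC⟩ := keyA hab hF ((i:ℝ) - α) i
    have hre : ((i:ℝ) - α) - (i:ℕ) = -α := by push_cast; ring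
    have hdom : IntegrableOn (fun t : ℝ => C * (t - a) ^ (-α)) (Set.Ioo a b) := by
      have h1 : IntervalIntegrable (fun x : ℝ => x ^ (-α)) volume 0 (b - a) :=
        intervalIntegral.intervalIntegrable_rpow' (by linarith)
      have h2 := h1.comp_sub_right a
      rw [zero_add, sub_add_cancel] at h2
      rw [intervalIntegrable_iff_integrableOn_Ioo_of_le hab.le] at h2
      exact h2.const_mul C
    have hmeas : AEStronglyMeasurable
        (iteratedDeriv i (fun s => F s * (s - a) ^ ((i : ℝ) - α)))
        (volume.restrict (Set.Ioo a b)) :=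
      (contOn hab hF ((i:ℝ) - α) i).aestronglyMeasurable measurableSet_Ioo
    have hIab : IntegrableOn (iteratedDeriv i (fun s => F s * (s - a) ^ ((i : ℝ) - α)))
        (Set.Ioo a b) := by
      refine Integrable.mono' hdom hmeas ?_
      refine (ae_restrict_iff' measurableSet_Ioo).2 (ae_of_all _ fun t ht => ?_)
      rw [Real.norm_eq_abs]
      have := hC t ht
      rwa [hre] at this
    have hIca : IntegrableOn (iteratedDeriv i (fun s => F s * (s - a) ^ ((i : ℝ) - α)))
        (Set.Ioo c a) :=
      integrableOn_zero.congr_fun (fun t ht => (hleft _ i t ht).symm) measurableSet_Ioo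
    have hIbd : IntegrableOn (iteratedDeriv i (fun s => F s * (s - a) ^ ((i : ℝ) - α)))
        (Set.Ioo b d) :=
      integrableOn_zero.congr_fun (fun t ht => (hright _ i t ht).symm) measurableSet_Ioo
    have hIcc : IntegrableOn (iteratedDeriv i (fun s => F s * (s - a) ^ ((i : ℝ) - α)))
        (Set.Icc a b) := by
      rw [integrableOn_Icc_iff_integrableOn_Ioo]
      exact hIab
    have hsub : Set.Ioo c d ⊆ (Set.Ioo c a ∪ Set.Icc a b) ∪ Set.Ioo b d := by
      intro t ht
      rcases lt_or_ge t a with h | h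
      · exact Or.inl (Or.inl ⟨ht.1, h⟩)
      · rcases le_or_gt t b with h' | h'
        · exact Or.inl (Or.inr ⟨h, h'⟩)
        · exact Or.inr ⟨h', ht.2⟩
    exact ((hIca.union hIcc).union hIbd).mono_set hsub
end
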